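/- Under the stated geometric assumptions with kᵅ ≠ kᵝ, suppose Ψ₁₂ ≤ ψ for a constant ψ < 2 min{kᵅ, kᵝ}. Then Ψ₁₂ is quadratic in ‖e₁₂‖: ψ̲ ‖e₁₂‖² ≤ Ψ₁₂ ≤ ψ̄ ‖e₁₂‖², where ψ̲ = min{kᵅ,kᵝ} / (2 max{(kᵅ)², (kᵝ)², (kᵅ−kᵝ)²} + 2(kᵅ+kᵝ)²) and ψ̄ = min{kᵅ,kᵝ}(kᵅ+kᵝ) / (min{(kᵅ)², (kᵝ)²}·(2 min{kᵅ,kᵝ} − ψ)). -/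

import Mathlib

set_option maxHeartbeats 1000000

noncomputable section
open Matrix

/-- Vectors in ℝ³ with the Euclidean norm. -/
abbrev V3 : Type := EuclideanSpace ℝ (Fin 3)

/-- Real 3×3 matrices. -/
abbrev M3 : Type := Matrix (Fin 3) (Fin 3) ℝ

/-- The special orthogonal group SO(3): RᵀR = I and det R = 1. -/
def SO3 (R : M3) : Prop := Rᵀ * R = 1 ∧ R.det = 1

/-- Action of a matrix on a vector. -/
def matVec (A : M3) (v : V3) : V3 := WithLp.toLp 2 (A.mulVec v)

/-- Cross product on ℝ³. -/
def cross3 (u v : V3) : V3 :=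
  WithLp.toLp 2 ![u 1 * v 2 - u 2 * v 1, u 2 * v 0 - u 0 * v 2, u 0 * v 1 - u 1 * v 0]

/-- The hat map: x̂ y = x × y. -/
def hat (x : V3) : M3 :=
  !![0, -x 2, x 1; x 2, 0, -x 0; -x 1, x 0, 0]

/-- The vee map, inverse of the hat map on skew-symmetric matrices. -/
def vee (A : M3) : V3 := WithLp.toLp 2 ![A 2 1, A 0 2, A 1 0]

/-- Dot product on ℝ³. -/
def dot3 (u v : V3) : ℝ := u 0 * v 0 + u 1 * v 1 + u 2 * v 2

attribute [local instance] Matrix.normedAddCommGroup Matrix.normedSpace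

/-! ### Auxiliary lemmas -/

lemma V3.ext3 {u v : V3} (h0 : u 0 = v 0) (h1 : u 1 = v 1) (h2 : u 2 = v 2) : u = v :=
  PiLp.ext fun i => by fin_cases i <;> [exact h0; exact h1; exact h2]

lemma SO3.mul_self_transpose {A : M3} (hA : SO3 A) : A * Aᵀ = 1 :=
  mul_eq_one_comm.mp hA.1

lemma SO3.mul {A B : M3} (hA : SO3 A) (hB : SO3 B) : SO3 (A * B) := by
  constructor
  · rw [Matrix.transpose_mul]
    calc Bᵀ * Aᵀ * (A * B) = Bᵀ * (Aᵀ * A * B) := by rw [mul_assoc, mul_assoc]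
    _ = 1 := by rw [hA.1, one_mul, hB.1]
  · rw [Matrix.det_mul, hA.2, hB.2, one_mul]

lemma SO3.transpose {A : M3} (hA : SO3 A) : SO3 Aᵀ := by
  refine ⟨?_, by rw [Matrix.det_transpose, hA.2]⟩
  rw [Matrix.transpose_transpose]
  exact hA.mul_self_transpose

lemma SO3.adjugate_eq {A : M3} (hA : SO3 A) : adjugate A = Aᵀ := by
  calc adjugate A = (Aᵀ * A) * adjugate A := by rw [hA.1, one_mul]
  _ = Aᵀ * (A * adjugate A) := by rw [mul_assoc]
  _ = Aᵀ := by rw [Matrix.mul_adjugate, hA.2, one_smul, mul_one]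

lemma matVec_apply (A : M3) (v : V3) (i : Fin 3) :
    matVec A v i = A i 0 * v 0 + A i 1 * v 1 + A i 2 * v 2 := by
  simp [matVec, Matrix.mulVec, dotProduct, Fin.sum_univ_three]

lemma entry_eq {M N : M3} (h : M = N) (i j : Fin 3) : M i j = N i j := by rw [h]

lemma cross3_zero (u v : V3) : (cross3 u v) 0 = u 1 * v 2 - u 2 * v 1 := rfl
lemma cross3_one (u v : V3) : (cross3 u v) 1 = u 2 * v 0 - u 0 * v 2 := rfl
lemma cross3_two (u v : V3) : (cross3 u v) 2 = u 0 * v 1 - u 1 * v 0 := rfl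
lemma smul_apply3 (c : ℝ) (v : V3) (i : Fin 3) : (c • v) i = c * v i := rfl
lemma add_apply3 (u v : V3) (i : Fin 3) : (u + v) i = u i + v i := rfl
lemma neg_apply3 (v : V3) (i : Fin 3) : (-v) i = -(v i) := rfl

lemma cross3_matVec {A : M3} (hA : SO3 A) (u v : V3) :
    cross3 (matVec A u) (matVec A v) = matVec A (cross3 u v) := by
  have hadj := hA.adjugate_eq
  rw [adjugate_fin_three] at hadj
  have h00 := entry_eq hadj 0 0; have h01 := entry_eq hadj 0 1
  have h02 := entry_eq hadj 0 2; have h10 := entry_eq hadj 1 0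
  have h11 := entry_eq hadj 1 1; have h12 := entry_eq hadj 1 2
  have h20 := entry_eq hadj 2 0; have h21 := entry_eq hadj 2 1
  have h22 := entry_eq hadj 2 2
  simp only [Matrix.transpose_apply, Matrix.cons_val', Matrix.cons_val_zero,
    Matrix.cons_val_one, Matrix.head_cons, Matrix.cons_val_two, Matrix.tail_cons,
    Matrix.head_fin_const, Matrix.empty_val', Matrix.cons_val_fin_one,
    Matrix.of_apply] at h00 h01 h02 h10 h11 h12 h20 h21 h22
  apply V3.ext3 <;>
    simp only [cross3_zero, cross3_one, cross3_two, matVec_apply]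
  · linear_combination (u 1 * v 2 - u 2 * v 1) * h00 + (u 2 * v 0 - u 0 * v 2) * h10 +
      (u 0 * v 1 - u 1 * v 0) * h20
  · linear_combination (u 1 * v 2 - u 2 * v 1) * h01 + (u 2 * v 0 - u 0 * v 2) * h11 +
      (u 0 * v 1 - u 1 * v 0) * h21
  · linear_combination (u 1 * v 2 - u 2 * v 1) * h02 + (u 2 * v 0 - u 0 * v 2) * h12 +
      (u 0 * v 1 - u 1 * v 0) * h22

lemma norm_sq_dot3 (v : V3) : ‖v‖^2 = dot3 v v := by
  have h : ‖v‖^2 = ∑ i, v i^2 := by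
    rw [EuclideanSpace.norm_eq, Real.sq_sqrt (by positivity)]
    simp [Real.norm_eq_abs, sq_abs]
  rw [h, Fin.sum_univ_three, dot3]; ring

lemma dot3_matVec_transpose (A : M3) (u v : V3) :
    dot3 (matVec Aᵀ u) v = dot3 u (matVec A v) := by
  simp only [dot3, matVec_apply, Matrix.transpose_apply]; ring

lemma dot3_matVec_same {A : M3} (hA : SO3 A) (u v : V3) :
    dot3 (matVec A u) (matVec A v) = dot3 u v := by
  have h := hA.1
  have h00 := entry_eq h 0 0; have h01 := entry_eq h 0 1; have h02 := entry_eq h 0 2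
  have h10 := entry_eq h 1 0; have h11 := entry_eq h 1 1; have h12 := entry_eq h 1 2
  have h20 := entry_eq h 2 0; have h21 := entry_eq h 2 1; have h22 := entry_eq h 2 2
  simp only [Matrix.mul_apply, Fin.sum_univ_three, Matrix.transpose_apply,
    Matrix.one_apply, if_true, if_false, Fin.isValue, reduceIte,
    show ((0:Fin 3) = 1) = False by simp, show ((0:Fin 3) = 2) = False by simp,
    show ((1:Fin 3) = 0) = False by simp, show ((1:Fin 3) = 2) = False by simp,
    show ((2:Fin 3) = 0) = False by simp, show ((2:Fin 3) = 1) = False by simp]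
    at h00 h01 h02 h10 h11 h12 h20 h21 h22
  simp only [dot3, matVec_apply]
  linear_combination (u 0 * v 0) * h00 + (u 0 * v 1) * h01 + (u 0 * v 2) * h02 +
    (u 1 * v 0) * h10 + (u 1 * v 1) * h11 + (u 1 * v 2) * h12 +
    (u 2 * v 0) * h20 + (u 2 * v 1) * h21 + (u 2 * v 2) * h22

lemma norm_matVec {A : M3} (hA : SO3 A) (v : V3) : ‖matVec A v‖ = ‖v‖ := by
  have h : ‖matVec A v‖^2 = ‖v‖^2 := by
    rw [norm_sq_dot3, norm_sq_dot3, dot3_matVec_same hA]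
  have h2 : |‖matVec A v‖| = |‖v‖| := by
    rw [← Real.sqrt_sq_eq_abs, ← Real.sqrt_sq_eq_abs, h]
  simpa [abs_of_nonneg, norm_nonneg] using h2

lemma dot3_comm (u v : V3) : dot3 u v = dot3 v u := by simp only [dot3]; ring
lemma dot3_neg_left (u v : V3) : dot3 (-u) v = -(dot3 u v) := by
  simp only [dot3, neg_apply3]; ring
lemma dot3_smul_left (c : ℝ) (u v : V3) : dot3 (c • u) v = c * dot3 u v := by
  simp only [dot3, smul_apply3]; ring
lemma dot3_smul_right (c : ℝ) (u v : V3) : dot3 u (c • v) = c * dot3 u v := by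
  simp only [dot3, smul_apply3]; ring
lemma matVec_matVec (A B : M3) (v : V3) : matVec A (matVec B v) = matVec (A*B) v := by
  apply V3.ext3 <;>
    simp only [matVec_apply, Matrix.mul_apply, Fin.sum_univ_three] <;> ring
lemma matVec_neg (A : M3) (v : V3) : matVec A (-v) = -(matVec A v) := by
  apply V3.ext3 <;> simp only [matVec_apply, neg_apply3] <;> ring
lemma matVec_smul (A : M3) (c : ℝ) (v : V3) : matVec A (c • v) = c • matVec A v := by
  apply V3.ext3 <;> simp only [matVec_apply, smul_apply3] <;> ring
lemma matVec_add (A : M3) (u v : V3) : matVec A (u + v) = matVec A u + matVec A v := by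
  apply V3.ext3 <;> simp only [matVec_apply, add_apply3] <;> ring
lemma cross3_neg_left (u v : V3) : cross3 (-u) v = -(cross3 u v) := by
  apply V3.ext3 <;>
    simp only [cross3_zero, cross3_one, cross3_two, neg_apply3] <;> ring
lemma cross3_smul_smul (c d : ℝ) (u v : V3) :
    cross3 (c • u) (d • v) = (c*d) • cross3 u v := by
  apply V3.ext3 <;>
    simp only [cross3_zero, cross3_one, cross3_two, smul_apply3] <;> ring

lemma dot3_self_cross (u v : V3) : dot3 u (cross3 u v) = 0 := by
  simp only [dot3, cross3_zero, cross3_one, cross3_two]; ring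
lemma dot3_self_cross' (u v : V3) : dot3 v (cross3 u v) = 0 := by
  simp only [dot3, cross3_zero, cross3_one, cross3_two]; ring
lemma dot3_cross_self (u v : V3) :
    dot3 (cross3 u v) (cross3 u v) = dot3 u u * dot3 v v - (dot3 u v)^2 := by
  simp only [dot3, cross3_zero, cross3_one, cross3_two]; ring

lemma cross3_comb (s n : V3) (hss : dot3 s s = 1) (hsn : dot3 s n = 0) (x y z : ℝ) :
    cross3 (x•s + y•n + z•cross3 s n) s = z • n + (-y) • cross3 s n := by
  have hss' : s 0 * s 0 + s 1 * s 1 + s 2 * s 2 = 1 := hss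
  have hsn' : s 0 * n 0 + s 1 * n 1 + s 2 * n 2 = 0 := hsn
  apply V3.ext3 <;>
    simp only [cross3_zero, cross3_one, cross3_two, add_apply3, smul_apply3, neg_apply3]
  · linear_combination (z * n 0) * hss' + (-(z * s 0)) * hsn'
  · linear_combination (z * n 1) * hss' + (-(z * s 1)) * hsn'
  · linear_combination (z * n 2) * hss' + (-(z * s 2)) * hsn'

lemma cross3_comb2 (s n : V3) (hnn : dot3 n n = 1) (hsn : dot3 s n = 0) (x y z : ℝ) :
    cross3 (x•s + y•n + z•cross3 s n) n = (-z) • s + x • cross3 s n := by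
  have hnn' : n 0 * n 0 + n 1 * n 1 + n 2 * n 2 = 1 := hnn
  have hsn' : s 0 * n 0 + s 1 * n 1 + s 2 * n 2 = 0 := hsn
  apply V3.ext3 <;>
    simp only [cross3_zero, cross3_one, cross3_two, add_apply3, smul_apply3, neg_apply3]
  · linear_combination (-(z * s 0)) * hnn' + (z * n 0) * hsn'
  · linear_combination (-(z * s 1)) * hnn' + (z * n 1) * hsn'
  · linear_combination (-(z * s 2)) * hnn' + (z * n 2) * hsn'

lemma dot3_combo (s n m : V3) (hss : dot3 s s = 1) (hnn : dot3 n n = 1)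
    (hmm : dot3 m m = 1) (hsn : dot3 s n = 0) (hsm : dot3 s m = 0)
    (hnm : dot3 n m = 0) (x y z : ℝ) :
    dot3 (x•s + y•n + z•m) (x•s + y•n + z•m) = x^2 + y^2 + z^2 := by
  have hss' : s 0 * s 0 + s 1 * s 1 + s 2 * s 2 = 1 := hss
  have hnn' : n 0 * n 0 + n 1 * n 1 + n 2 * n 2 = 1 := hnn
  have hmm' : m 0 * m 0 + m 1 * m 1 + m 2 * m 2 = 1 := hmm
  have hsn' : s 0 * n 0 + s 1 * n 1 + s 2 * n 2 = 0 := hsn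
  have hsm' : s 0 * m 0 + s 1 * m 1 + s 2 * m 2 = 0 := hsm
  have hnm' : n 0 * m 0 + n 1 * m 1 + n 2 * m 2 = 0 := hnm
  simp only [dot3, add_apply3, smul_apply3]
  linear_combination (x^2) * hss' + (y^2) * hnn' + (z^2) * hmm' + (2*x*y) * hsn'
    + (2*x*z) * hsm' + (2*y*z) * hnm'

lemma key_core (a b : ℝ) (ha : 0 < a) (hb : 0 < b) (hab : a ≤ b)
    (p11 p12 p13 p21 p22 p23 p31 p32 p33 : ℝ)
    (hr1 : p11^2 + p12^2 + p13^2 = 1) (hr2 : p21^2 + p22^2 + p23^2 = 1)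
    (hr3 : p31^2 + p32^2 + p33^2 = 1)
    (hc1 : p11^2 + p21^2 + p31^2 = 1) (hc2 : p12^2 + p22^2 + p32^2 = 1)
    (hc3 : p13^2 + p23^2 + p33^2 = 1)
    (hc11 : p11 = p22*p33 - p23*p32) (hc22 : p22 = p11*p33 - p13*p31)
    (hc33 : p33 = p11*p22 - p12*p21)
    (ψ Ψ w : ℝ)
    (hΨ : Ψ = a*(1-p11) + b*(1-p22))
    (hw : w = b^2*p23^2 + a^2*p13^2 + (b*p21 - a*p12)^2)
    (hψ : ψ < 2*a) (hΨψ : Ψ ≤ ψ) :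
    (a / (2*b^2 + 2*(a+b)^2)) * w ≤ Ψ ∧ Ψ ≤ (a*(a+b)/(a^2*(2*a-ψ))) * w := by
  subst hΨ hw
  have e1 : 0 ≤ 1 - p11 := by linarith [sq_nonneg p12, sq_nonneg p13, sq_nonneg (1-p11)]
  have e2 : 0 ≤ 1 - p22 := by linarith [sq_nonneg p21, sq_nonneg p23, sq_nonneg (1-p22)]
  have hab2 : 0 ≤ a*(b-a) := mul_nonneg ha.le (by linarith)
  have hab3 : 0 ≤ a*b*(b-a) := mul_nonneg (mul_pos ha hb).le (by linarith)
  have hab4 : 0 ≤ a*a*(b-a) := mul_nonneg (mul_pos ha ha).le (by linarith)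
  constructor
  · -- lower bound
    have d1 : 0 ≤ ((2*b^2+2*(a+b)^2)*a - 4*a^3) := by
      have h3 : 0 < a*a*a := by positivity
      linarith [hab3, hab4, h3]
    have d2 : 0 ≤ ((2*b^2+2*(a+b)^2)*b - 4*a*b^2) := by
      have h1 : 0 < b*b*b := by positivity
      have h2 : 0 < a*a*b := by positivity
      linarith [h1, h2]
    have hz1 : 2*a^3*(1 - p11^2 - p12^2 - p13^2) = 0 := by linear_combination (-2*a^3) * hr1
    have hz2 : 2*a*b^2*(1 - p22^2 - p21^2 - p23^2) = 0 := by linear_combination (-2*a*b^2) * hr2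
    have key1 : a*(b^2*p23^2 + a^2*p13^2 + (b*p21 - a*p12)^2)
        ≤ (2*b^2 + 2*(a+b)^2) * (a*(1-p11) + b*(1-p22)) := by
      nlinarith [mul_nonneg d1 e1, mul_nonneg d2 e2,
        mul_nonneg ha.le (sq_nonneg (a*p12 + b*p21)),
        mul_nonneg ha.le (sq_nonneg (a*p13)), mul_nonneg ha.le (sq_nonneg (b*p23)),
        mul_nonneg ha.le (sq_nonneg (a*(1-p11))), mul_nonneg ha.le (sq_nonneg (b*(1-p22))),
        hz1, hz2]
    have hD : (0:ℝ) < 2*b^2 + 2*(a+b)^2 := by positivity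
    rw [div_mul_eq_mul_div, div_le_iff₀ hD]
    linarith [key1]
  · -- upper bound
    have hI1 : (1+p11+p22+p33)*(1+p11-p22-p33) = (p32-p23)^2 := by
      linear_combination hc1 - hr2 - hr3 + 2*hc11
    have hI2 : (1+p11+p22+p33)*(1-p11+p22-p33) = (p13-p31)^2 := by
      linear_combination hc2 - hr1 - hr3 + 2*hc22
    have hI3 : (1+p11+p22+p33)*(1-p11-p22+p33) = (p21-p12)^2 := by
      linear_combination hc3 - hr1 - hr2 + 2*hc33
    have hJ1 : (p23+p32)*(p32-p23) = (p13+p31)*(p13-p31) := by linear_combination hr3 - hc3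
    have hJ2 : (p13+p31)*(p13-p31) = (p21+p12)*(p21-p12) := by linear_combination hr1 - hc1
    have hs4 : 4*(1+p11+p22+p33) = (1+p11+p22+p33)^2 + ((p32-p23)^2+(p13-p31)^2+(p21-p12)^2) := by
      linear_combination hI1 + hI2 + hI3
    have hA0 : 0 ≤ 1+p11+p22+p33 := by
      linarith [hs4, sq_nonneg (1+p11+p22+p33), sq_nonneg (p32-p23), sq_nonneg (p13-p31), sq_nonneg (p21-p12)]
    have hA1 : 0 ≤ 1+p11-p22-p33 := by
      rcases eq_or_lt_of_le hA0 with h|h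
      · linarith [sq_nonneg p12, sq_nonneg p13, sq_nonneg (1+p11)]
      · by_contra h'; push_neg at h'
        have := mul_pos h (neg_pos.2 h')
        linarith [hI1, sq_nonneg (p32-p23), this]
    have hA2 : 0 ≤ 1-p11+p22-p33 := by
      rcases eq_or_lt_of_le hA0 with h|h
      · linarith [sq_nonneg p21, sq_nonneg p23, sq_nonneg (1+p22)]
      · by_contra h'; push_neg at h'
        have := mul_pos h (neg_pos.2 h')
        linarith [hI2, sq_nonneg (p13-p31), this]
    have hA3 : 0 ≤ 1-p11-p22+p33 := by
      rcases eq_or_lt_of_le hA0 with h|h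
      · linarith [sq_nonneg p31, sq_nonneg p32, sq_nonneg (1+p33)]
      · by_contra h'; push_neg at h'
        have := mul_pos h (neg_pos.2 h')
        linarith [hI3, sq_nonneg (p21-p12), this]
    have h3T0 : 0 ≤ 3 - (p11+p22+p33) := by linarith
    have hT3 : a*(3-(p11+p22+p33)) ≤ 2*(a*(1-p11) + b*(1-p22)) := by
      have u1 := mul_nonneg ha.le hA3
      have u2 : (0:ℝ) ≤ 2*(b-a)*(1-p22) := mul_nonneg (by linarith) e2
      linarith [u1, u2]
    have hUp : 2*(a*(1-p11) + b*(1-p22)) ≤ (a+b)*(3-(p11+p22+p33)) := by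
      linarith [mul_nonneg ha.le hA1, mul_nonneg hb.le hA2]
    have hδ' : a^2*((p32-p23)^2+(p13-p31)^2+(p21-p12)^2)
        = a^2*((1+p11+p22+p33)*(3-(p11+p22+p33))) := by
      linear_combination (-(a^2))*(hI1 + hI2 + hI3)
    have hEq : 4*(b^2*p23^2 + a^2*p13^2 + (b*p21 - a*p12)^2)
        = b^2*(p32-p23)^2 + a^2*(p13-p31)^2 + (a+b)^2*(p21-p12)^2
        + b^2*(p23+p32)^2 + a^2*(p13+p31)^2 + (b-a)^2*(p12+p21)^2 := by
      linear_combination (-2*b^2)*hJ1 + (-(2*b^2-2*a^2))*hJ2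
    have hba2 : 0 ≤ b^2 - a^2 := by linarith [mul_nonneg (sub_nonneg.2 hab) (by linarith : (0:ℝ) ≤ a+b)]
    have hba3 : 0 ≤ (a+b)^2 - a^2 := by linarith [mul_pos hb (by linarith : (0:ℝ) < 2*a+b)]
    have hwlow : a^2*((1+p11+p22+p33)*(3-(p11+p22+p33)))
        ≤ 4*(b^2*p23^2 + a^2*p13^2 + (b*p21 - a*p12)^2) := by
      linarith [hEq, hδ',
        mul_nonneg hba2 (sq_nonneg (p32-p23)),
        mul_nonneg hba3 (sq_nonneg (p21-p12)),
        mul_nonneg (sq_nonneg b) (sq_nonneg (p23+p32)),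
        mul_nonneg (sq_nonneg a) (sq_nonneg (p13+p31)),
        mul_nonneg (sq_nonneg (b-a)) (sq_nonneg (p12+p21))]
    have hTlow : 2*(2*a-ψ) ≤ a*(1+p11+p22+p33) := by linarith [hT3, hΨψ]
    have hden : (0:ℝ) < a^2*(2*a-ψ) := by
      apply mul_pos (by positivity); linarith
    rw [div_mul_eq_mul_div, le_div_iff₀ hden]
    have hX : (0:ℝ) ≤ (a+b)*(3-(p11+p22+p33))*a^2 := mul_nonneg (mul_nonneg (by positivity) h3T0) (sq_nonneg a)
    have h1 := mul_le_mul_of_nonneg_left hwlow (by positivity : (0:ℝ) ≤ a*(a+b))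
    have h2 := mul_le_mul_of_nonneg_left hTlow hX
    have h3 := mul_le_mul_of_nonneg_left hUp (mul_nonneg (by positivity : (0:ℝ) ≤ 2*a^2) (by linarith : (0:ℝ) ≤ 2*a-ψ))
    linarith [h1, h2, h3]

lemma key (a b : ℝ) (ha : 0 < a) (hb : 0 < b)
    (p11 p12 p13 p21 p22 p23 p31 p32 p33 : ℝ)
    (hr1 : p11^2 + p12^2 + p13^2 = 1) (hr2 : p21^2 + p22^2 + p23^2 = 1)
    (hr3 : p31^2 + p32^2 + p33^2 = 1)
    (hc1 : p11^2 + p21^2 + p31^2 = 1) (hc2 : p12^2 + p22^2 + p32^2 = 1)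
    (hc3 : p13^2 + p23^2 + p33^2 = 1)
    (hc11 : p11 = p22*p33 - p23*p32) (hc22 : p22 = p11*p33 - p13*p31)
    (hc33 : p33 = p11*p22 - p12*p21)
    (ψ Ψ w : ℝ)
    (hΨ : Ψ = a*(1-p11) + b*(1-p22))
    (hw : w = b^2*p23^2 + a^2*p13^2 + (b*p21 - a*p12)^2)
    (hψ : ψ < 2*min a b) (hΨψ : Ψ ≤ ψ) :
    (min a b / (2*max (a^2) (max (b^2) ((a-b)^2)) + 2*(a+b)^2)) * w ≤ Ψ ∧
      Ψ ≤ (min a b*(a+b)/(min (a^2) (b^2)*(2*min a b - ψ))) * w := by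
  rcases le_total a b with hab|hba
  · have hmin : min a b = a := min_eq_left hab
    have hq : a^2 ≤ b^2 := by nlinarith
    have hminsq : min (a^2) (b^2) = a^2 := min_eq_left hq
    have hsub : (a-b)^2 ≤ b^2 := by nlinarith
    have hmax : max (a^2) (max (b^2) ((a-b)^2)) = b^2 := by
      rw [max_eq_left hsub, max_eq_right hq]
    rw [hmin, hminsq, hmax]
    rw [hmin] at hψ
    exact key_core a b ha hb hab p11 p12 p13 p21 p22 p23 p31 p32 p33
      hr1 hr2 hr3 hc1 hc2 hc3 hc11 hc22 hc33 ψ Ψ w hΨ hw hψ hΨψ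
  · have hmin : min a b = b := min_eq_right hba
    have hq : b^2 ≤ a^2 := by nlinarith
    have hminsq : min (a^2) (b^2) = b^2 := min_eq_right hq
    have hsub : (a-b)^2 ≤ a^2 := by nlinarith
    have hmax : max (a^2) (max (b^2) ((a-b)^2)) = a^2 :=
      max_eq_left (max_le hq hsub)
    rw [hmin, hminsq, hmax]
    rw [hmin] at hψ
    obtain ⟨L, U⟩ := key_core b a hb ha hba p22 p21 p23 p12 p11 p13 p32 p31 p33
      (by linear_combination hr2) (by linear_combination hr1) (by linear_combination hr3)
      (by linear_combination hc2) (by linear_combination hc1) (by linear_combination hc3)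
      hc22 hc11 (by linear_combination hc33)
      ψ Ψ w (by linear_combination hΨ) (by linear_combination hw) hψ hΨψ
    rw [add_comm b a] at L U
    exact ⟨L, U⟩

/-- the configuration error function is quadratic in ‖e₁₂‖ on the
sublevel set Ψ₁₂ ≤ ψ < 2 min{kᵅ, kᵝ}. -/
theorem Psi_quadratic_bounds
    (s₁₂ s₁₃ s₂₁ s₂₃ : V3)
    (hs₁₂ : ‖s₁₂‖ = 1) (hs₁₃ : ‖s₁₃‖ = 1) (hs₂₁ : ‖s₂₁‖ = 1) (hs₂₃ : ‖s₂₃‖ = 1)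
    (hopp : s₁₂ = -s₂₁)
    (s₁₂₃ s₂₁₃ : V3) (hs₁₂₃ : s₁₂₃ = cross3 s₁₂ s₁₃) (hs₂₁₃ : s₂₁₃ = cross3 s₂₁ s₂₃)
    (h₁ : s₁₂₃ ≠ 0) (h₂ : s₂₁₃ ≠ 0)
    (hnormal : ‖s₂₁₃‖⁻¹ • s₂₁₃ = -(‖s₁₂₃‖⁻¹ • s₁₂₃))
    (R₁ R₂ : M3) (hR₁ : SO3 R₁) (hR₂ : SO3 R₂)
    (b₁₂ b₁₃ b₂₁ b₂₃ b₁₂₃ b₂₁₃ : V3)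
    (hb₁₂ : b₁₂ = matVec R₁ᵀ s₁₂) (hb₁₃ : b₁₃ = matVec R₁ᵀ s₁₃)
    (hb₂₁ : b₂₁ = matVec R₂ᵀ s₂₁) (hb₂₃ : b₂₃ = matVec R₂ᵀ s₂₃)
    (hb₁₂₃ : b₁₂₃ = cross3 b₁₂ b₁₃) (hb₂₁₃ : b₂₁₃ = cross3 b₂₁ b₂₃)
    (a₁₂ : ℝ) (ha₁₂ : a₁₂ = ‖b₂₁₃‖ * ‖b₁₂₃‖)
    (Qd₁₂ Qd₂₁ : M3) (hQd : SO3 Qd₁₂) (hQd₂₁ : Qd₂₁ = Qd₁₂ᵀ)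
    (kα kβ : ℝ) (hkα : 0 < kα) (hkβ : 0 < kβ)
    (hkαβ : kα ≠ kβ)
    (Ψ : ℝ)
    (hΨ : Ψ = kα * (1 + dot3 b₂₁ (matVec Qd₁₂ b₁₂))
        + kβ * (1 + a₁₂⁻¹ * dot3 b₂₁₃ (matVec Qd₁₂ b₁₂₃)))
    (e₁₂ : V3)
    (he₁₂ : e₁₂ = kα • cross3 (matVec Qd₂₁ b₂₁) b₁₂
        + (kβ / a₁₂) • cross3 (matVec Qd₂₁ b₂₁₃) b₁₂₃)
    (ψ : ℝ) (hψ : ψ < 2 * min kα kβ) (hΨψ : Ψ ≤ ψ) :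
    (min kα kβ / (2 * max (kα ^ 2) (max (kβ ^ 2) ((kα - kβ) ^ 2))
        + 2 * (kα + kβ) ^ 2)) * ‖e₁₂‖ ^ 2 ≤ Ψ ∧
      Ψ ≤ (min kα kβ * (kα + kβ) / (min (kα ^ 2) (kβ ^ 2)
        * (2 * min kα kβ - ψ))) * ‖e₁₂‖ ^ 2 := by
  have hR1t : SO3 R₁ᵀ := hR₁.transpose
  have hR2t : SO3 R₂ᵀ := hR₂.transpose
  obtain ⟨E, hEdef⟩ : ∃ E : M3, E = R₂ * (Qd₁₂ * R₁ᵀ) := ⟨_, rfl⟩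
  have hE : SO3 E := by rw [hEdef]; exact hR₂.mul (hQd.mul hR1t)
  have hEt : Eᵀ = R₁ * (Qd₁₂ᵀ * R₂ᵀ) := by
    rw [hEdef]
    simp [Matrix.transpose_mul, Matrix.transpose_transpose, mul_assoc]
  have hs21 : s₂₁ = -s₁₂ := by rw [hopp, neg_neg]
  have hb123 : b₁₂₃ = matVec R₁ᵀ s₁₂₃ := by
    rw [hb₁₂₃, hb₁₂, hb₁₃, cross3_matVec hR1t, hs₁₂₃]
  have hb213 : b₂₁₃ = matVec R₂ᵀ s₂₁₃ := by
    rw [hb₂₁₃, hb₂₁, hb₂₃, cross3_matVec hR2t, hs₂₁₃]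
  have h123 : ‖s₁₂₃‖ ≠ 0 := norm_ne_zero_iff.mpr h₁
  have h213 : ‖s₂₁₃‖ ≠ 0 := norm_ne_zero_iff.mpr h₂
  have ha' : a₁₂ = ‖s₂₁₃‖ * ‖s₁₂₃‖ := by
    rw [ha₁₂, hb123, hb213, norm_matVec hR2t, norm_matVec hR1t]
  have hane : a₁₂ ≠ 0 := by rw [ha']; exact mul_ne_zero h213 h123
  obtain ⟨n, hndef⟩ : ∃ n : V3, n = ‖s₁₂₃‖⁻¹ • s₁₂₃ := ⟨_, rfl⟩
  have hs123n : s₁₂₃ = ‖s₁₂₃‖ • n := by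
    rw [hndef, smul_smul, mul_inv_cancel₀ h123, one_smul]
  have hs213n : s₂₁₃ = ‖s₂₁₃‖ • (-n) := by
    rw [hndef, ← hnormal, smul_smul, mul_inv_cancel₀ h213, one_smul]
  have hss : dot3 s₁₂ s₁₂ = 1 := by rw [← norm_sq_dot3, hs₁₂]; norm_num
  have hscross : dot3 s₁₂ s₁₂₃ = 0 := by rw [hs₁₂₃]; exact dot3_self_cross _ _
  have hsn : dot3 s₁₂ n = 0 := by rw [hndef, dot3_smul_right, hscross, mul_zero]
  have hnn : dot3 n n = 1 := by
    rw [hndef, dot3_smul_left, dot3_smul_right, ← norm_sq_dot3]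
    field_simp
  obtain ⟨m, hmdef⟩ : ∃ m : V3, m = cross3 s₁₂ n := ⟨_, rfl⟩
  have hsm : dot3 s₁₂ m = 0 := by rw [hmdef]; exact dot3_self_cross _ _
  have hnm : dot3 n m = 0 := by rw [hmdef]; exact dot3_self_cross' _ _
  have hmm : dot3 m m = 1 := by rw [hmdef, dot3_cross_self, hss, hnn, hsn]; norm_num
  have hss' : s₁₂ 0 * s₁₂ 0 + s₁₂ 1 * s₁₂ 1 + s₁₂ 2 * s₁₂ 2 = 1 := hss
  have hnn' : n 0 * n 0 + n 1 * n 1 + n 2 * n 2 = 1 := hnn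
  have hmm' : m 0 * m 0 + m 1 * m 1 + m 2 * m 2 = 1 := hmm
  have hsn' : s₁₂ 0 * n 0 + s₁₂ 1 * n 1 + s₁₂ 2 * n 2 = 0 := hsn
  have hsm' : s₁₂ 0 * m 0 + s₁₂ 1 * m 1 + s₁₂ 2 * m 2 = 0 := hsm
  have hnm' : n 0 * m 0 + n 1 * m 1 + n 2 * m 2 = 0 := hnm
  -- the orthonormal frame matrix B with columns s₁₂, n, m
  obtain ⟨B, hBdef⟩ : ∃ B : M3, B = Matrix.of ![![s₁₂ 0, n 0, m 0],
      ![s₁₂ 1, n 1, m 1], ![s₁₂ 2, n 2, m 2]] := ⟨_, rfl⟩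
  have hBTB : Bᵀ * B = 1 := by
    ext i j
    simp only [Matrix.mul_apply, Matrix.transpose_apply, Fin.sum_univ_three]
    fin_cases i <;> fin_cases j <;>
      simp [hBdef, Matrix.one_apply] <;>
      first
        | linear_combination hss' | linear_combination hnn' | linear_combination hmm'
        | linear_combination hsn' | linear_combination hsm' | linear_combination hnm'
  have hm0 : s₁₂ 1 * n 2 - s₁₂ 2 * n 1 = m 0 := by rw [hmdef]; rfl
  have hm1 : s₁₂ 2 * n 0 - s₁₂ 0 * n 2 = m 1 := by rw [hmdef]; rfl
  have hm2 : s₁₂ 0 * n 1 - s₁₂ 1 * n 0 = m 2 := by rw [hmdef]; rfl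
  have hdetB : B.det = 1 := by
    rw [hBdef, Matrix.det_fin_three]
    simp only [Matrix.of_apply, Matrix.cons_val', Matrix.cons_val_zero,
      Matrix.cons_val_one, Matrix.head_cons, Matrix.cons_val_two, Matrix.tail_cons,
      Matrix.empty_val', Matrix.cons_val_fin_one, Matrix.head_fin_const]
    linear_combination hmm' + m 0 * hm0 + m 1 * hm1 + m 2 * hm2
  have hB : SO3 B := ⟨hBTB, hdetB⟩
  have hBBT : B * Bᵀ = 1 := hB.mul_self_transpose
  -- completeness of the frame
  have hbb : ∀ i j : Fin 3, B i 0 * B j 0 + B i 1 * B j 1 + B i 2 * B j 2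
      = (1:M3) i j := by
    intro i j
    have := entry_eq hBBT i j
    simpa [Matrix.mul_apply, Matrix.transpose_apply, Fin.sum_univ_three] using this
  have e00 : s₁₂ 0 * s₁₂ 0 + n 0 * n 0 + m 0 * m 0 = 1 := by
    have := hbb 0 0; rw [hBdef] at this; simpa using this
  have e01 : s₁₂ 0 * s₁₂ 1 + n 0 * n 1 + m 0 * m 1 = 0 := by
    have := hbb 0 1; rw [hBdef] at this; simpa using this
  have e02 : s₁₂ 0 * s₁₂ 2 + n 0 * n 2 + m 0 * m 2 = 0 := by
    have := hbb 0 2; rw [hBdef] at this; simpa using this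
  have e11 : s₁₂ 1 * s₁₂ 1 + n 1 * n 1 + m 1 * m 1 = 1 := by
    have := hbb 1 1; rw [hBdef] at this; simpa using this
  have e12 : s₁₂ 1 * s₁₂ 2 + n 1 * n 2 + m 1 * m 2 = 0 := by
    have := hbb 1 2; rw [hBdef] at this; simpa using this
  have e22 : s₁₂ 2 * s₁₂ 2 + n 2 * n 2 + m 2 * m 2 = 1 := by
    have := hbb 2 2; rw [hBdef] at this; simpa using this
  have hcomp : ∀ v : V3, v = dot3 s₁₂ v • s₁₂ + dot3 n v • n + dot3 m v • m := by
    intro v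
    apply V3.ext3 <;> simp only [dot3, add_apply3, smul_apply3]
    · linear_combination (-(v 0)) * e00 + (-(v 1)) * e01 + (-(v 2)) * e02
    · linear_combination (-(v 0)) * e01 + (-(v 1)) * e11 + (-(v 2)) * e12
    · linear_combination (-(v 0)) * e02 + (-(v 1)) * e12 + (-(v 2)) * e22
  -- the matrix P of E in the frame B
  obtain ⟨P, hPdef⟩ : ∃ P : M3, P = Bᵀ * (E * B) := ⟨_, rfl⟩
  have hP : SO3 P := by rw [hPdef]; exact hB.transpose.mul (hE.mul hB)
  have hPPT : P * Pᵀ = 1 := hP.mul_self_transpose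
  have hPTP : Pᵀ * P = 1 := hP.1
  have hadjP := hP.adjugate_eq
  rw [adjugate_fin_three] at hadjP
  have hr1 : P 0 0^2 + P 0 1^2 + P 0 2^2 = 1 := by
    have := entry_eq hPPT 0 0
    simp [Matrix.mul_apply, Matrix.transpose_apply, Fin.sum_univ_three] at this
    linear_combination this
  have hr2 : P 1 0^2 + P 1 1^2 + P 1 2^2 = 1 := by
    have := entry_eq hPPT 1 1
    simp [Matrix.mul_apply, Matrix.transpose_apply, Fin.sum_univ_three] at this
    linear_combination this
  have hr3 : P 2 0^2 + P 2 1^2 + P 2 2^2 = 1 := by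
    have := entry_eq hPPT 2 2
    simp [Matrix.mul_apply, Matrix.transpose_apply, Fin.sum_univ_three] at this
    linear_combination this
  have hq1 : P 0 0^2 + P 1 0^2 + P 2 0^2 = 1 := by
    have := entry_eq hPTP 0 0
    simp [Matrix.mul_apply, Matrix.transpose_apply, Fin.sum_univ_three] at this
    linear_combination this
  have hq2 : P 0 1^2 + P 1 1^2 + P 2 1^2 = 1 := by
    have := entry_eq hPTP 1 1
    simp [Matrix.mul_apply, Matrix.transpose_apply, Fin.sum_univ_three] at this
    linear_combination this
  have hq3 : P 0 2^2 + P 1 2^2 + P 2 2^2 = 1 := by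
    have := entry_eq hPTP 2 2
    simp [Matrix.mul_apply, Matrix.transpose_apply, Fin.sum_univ_three] at this
    linear_combination this
  have hc11 : P 0 0 = P 1 1 * P 2 2 - P 1 2 * P 2 1 := by
    have := entry_eq hadjP 0 0
    simp [Matrix.transpose_apply] at this
    linear_combination -this
  have hc22 : P 1 1 = P 0 0 * P 2 2 - P 0 2 * P 2 0 := by
    have := entry_eq hadjP 1 1
    simp [Matrix.transpose_apply] at this
    linear_combination -this
  have hc33 : P 2 2 = P 0 0 * P 1 1 - P 0 1 * P 1 0 := by
    have := entry_eq hadjP 2 2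
    simp [Matrix.transpose_apply] at this
    linear_combination -this
  -- entries of P as frame components
  have hp11 : P 0 0 = dot3 s₁₂ (matVec E s₁₂) := by
    rw [hPdef]
    simp only [Matrix.mul_apply, Matrix.transpose_apply, Fin.sum_univ_three]
    simp [hBdef, dot3, matVec_apply]
    try ring
  have hp12 : P 0 1 = dot3 s₁₂ (matVec E n) := by
    rw [hPdef]
    simp only [Matrix.mul_apply, Matrix.transpose_apply, Fin.sum_univ_three]
    simp [hBdef, dot3, matVec_apply]
    try ring
  have hp13 : P 0 2 = dot3 s₁₂ (matVec E m) := by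
    rw [hPdef]
    simp only [Matrix.mul_apply, Matrix.transpose_apply, Fin.sum_univ_three]
    simp [hBdef, dot3, matVec_apply]
    try ring
  have hp21 : P 1 0 = dot3 n (matVec E s₁₂) := by
    rw [hPdef]
    simp only [Matrix.mul_apply, Matrix.transpose_apply, Fin.sum_univ_three]
    simp [hBdef, dot3, matVec_apply]
    try ring
  have hp22 : P 1 1 = dot3 n (matVec E n) := by
    rw [hPdef]
    simp only [Matrix.mul_apply, Matrix.transpose_apply, Fin.sum_univ_three]
    simp [hBdef, dot3, matVec_apply]
    try ring
  have hp23 : P 1 2 = dot3 n (matVec E m) := by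
    rw [hPdef]
    simp only [Matrix.mul_apply, Matrix.transpose_apply, Fin.sum_univ_three]
    simp [hBdef, dot3, matVec_apply]
    try ring
  -- Ψ in terms of P
  have ht1 : dot3 b₂₁ (matVec Qd₁₂ b₁₂) = -(dot3 s₁₂ (matVec E s₁₂)) := by
    rw [hb₂₁, hb₁₂, matVec_matVec, dot3_matVec_transpose, matVec_matVec, ← hEdef,
      hs21, dot3_neg_left]
  have ht2 : dot3 b₂₁₃ (matVec Qd₁₂ b₁₂₃) = -(a₁₂ * dot3 n (matVec E n)) := by
    rw [hb213, hb123, matVec_matVec, dot3_matVec_transpose, matVec_matVec, ← hEdef,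
      hs213n, hs123n, matVec_smul, dot3_smul_left, dot3_smul_right, dot3_neg_left, ha']
    ring
  have hΨP : Ψ = kα*(1 - P 0 0) + kβ*(1 - P 1 1) := by
    rw [hΨ, ht1, ht2, ← hp11, ← hp22]
    field_simp
    ring
  -- e₁₂ in terms of P
  have hRE : R₁ᵀ * Eᵀ = Qd₁₂ᵀ * R₂ᵀ := by
    rw [hEt, ← mul_assoc, hR₁.1, one_mul]
  have hQb21 : matVec Qd₂₁ b₂₁ = matVec R₁ᵀ (matVec Eᵀ s₂₁) := by
    rw [hQd₂₁, hb₂₁, matVec_matVec, matVec_matVec, hRE]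
  have hQb213 : matVec Qd₂₁ b₂₁₃ = matVec R₁ᵀ (matVec Eᵀ s₂₁₃) := by
    rw [hQd₂₁, hb213, matVec_matVec, matVec_matVec, hRE]
  have hu1 : matVec Eᵀ s₁₂ = P 0 0 • s₁₂ + P 0 1 • n + P 0 2 • m := by
    have h := hcomp (matVec Eᵀ s₁₂)
    rw [dot3_comm s₁₂ (matVec Eᵀ s₁₂), dot3_comm n (matVec Eᵀ s₁₂),
      dot3_comm m (matVec Eᵀ s₁₂), dot3_matVec_transpose, dot3_matVec_transpose,
      dot3_matVec_transpose, ← hp11, ← hp12, ← hp13] at h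
    exact h
  have hu2 : matVec Eᵀ n = P 1 0 • s₁₂ + P 1 1 • n + P 1 2 • m := by
    have h := hcomp (matVec Eᵀ n)
    rw [dot3_comm s₁₂ (matVec Eᵀ n), dot3_comm n (matVec Eᵀ n),
      dot3_comm m (matVec Eᵀ n), dot3_matVec_transpose, dot3_matVec_transpose,
      dot3_matVec_transpose, ← hp21, ← hp22, ← hp23] at h
    exact h
  have hcross1 : cross3 (matVec Eᵀ s₁₂) s₁₂ = P 0 2 • n + (-(P 0 1)) • m := by
    rw [hu1, hmdef, cross3_comb s₁₂ n hss hsn]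
  have hcross2 : cross3 (matVec Eᵀ n) n = (-(P 1 2)) • s₁₂ + P 1 0 • m := by
    rw [hu2, hmdef, cross3_comb2 s₁₂ n hnn hsn]
  obtain ⟨W, hWdef⟩ : ∃ W : V3, W = (-kα) • (cross3 (matVec Eᵀ s₁₂) s₁₂)
      + (-kβ) • (cross3 (matVec Eᵀ n) n) := ⟨_, rfl⟩
  have hterm1 : cross3 (matVec Eᵀ s₂₁) s₁₂ = -(cross3 (matVec Eᵀ s₁₂) s₁₂) := by
    rw [hs21, matVec_neg, cross3_neg_left]
  have hterm2 : cross3 (matVec Eᵀ s₂₁₃) s₁₂₃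
      = a₁₂ • -(cross3 (matVec Eᵀ n) n) := by
    rw [hs213n, hs123n, matVec_smul, matVec_neg, cross3_smul_smul, cross3_neg_left,
      ← ha']
  have he' : e₁₂ = matVec R₁ᵀ W := by
    rw [he₁₂, hQb21, hQb213, hb₁₂, hb123, cross3_matVec hR1t, cross3_matVec hR1t,
      hterm1, hterm2, hWdef]
    apply V3.ext3 <;>
      simp only [matVec_apply, add_apply3, smul_apply3, neg_apply3] <;>
      field_simp <;> ring
  have hnorm_e : ‖e₁₂‖^2 = dot3 W W := by
    rw [he', norm_matVec hR1t, norm_sq_dot3]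
  have hW : W = (kβ*(P 1 2)) • s₁₂ + (-(kα*(P 0 2))) • n
      + (kα*(P 0 1) - kβ*(P 1 0)) • m := by
    rw [hWdef, hcross1, hcross2]
    apply V3.ext3 <;> simp only [add_apply3, smul_apply3, neg_apply3] <;> ring
  have hwsq : ‖e₁₂‖^2 = kβ^2*(P 1 2)^2 + kα^2*(P 0 2)^2
      + (kβ*(P 1 0) - kα*(P 0 1))^2 := by
    rw [hnorm_e, hW, dot3_combo s₁₂ n m hss hnn hmm hsn hsm hnm]
    ring
  exact key kα kβ hkα hkβ (P 0 0) (P 0 1) (P 0 2) (P 1 0) (P 1 1) (P 1 2)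
    (P 2 0) (P 2 1) (P 2 2) hr1 hr2 hr3 hq1 hq2 hq3 hc11 hc22 hc33
    ψ Ψ (‖e₁₂‖^2) hΨP hwsq hψ hΨψ
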